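/- arXiv:2311.16186 — 3 statements merged into one kernel-verified Lean document; each statement's English description precedes it below -/
import Mathlib

section
/- Let s be a real number with s > 0 and s not an even positive integer, and let α, β be real numbers with |α| < π and |β| < π. Then ∫_0^∞ x^{s−1}·log((cos α + cosh x)/(cos β + cosh x)) dx = (2^s·π^{s+1}·csc(π·s/2)/s)·( ζ(−s, (π−α)/(2π)) + ζ(−s, (α+π)/(2π)) − ζ(−s, (π−β)/(2π)) − ζ(−s, (β+π)/(2π)) ), where ζ(s, a) denotes the Hurwitz zeta function. -/
open Real MeasureTheory HurwitzZeta

section Aux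

lemma hasSum_log_aux {θ x : ℝ} (hx : 0 < x) :
    HasSum (fun n : ℕ ↦ 2 * ((-1) ^ (n + 1) * Real.exp (-x) ^ n * Real.cos (n * θ) / n))
      (Real.log (Real.cos θ + Real.cosh x) - (x - Real.log 2)) := by
  set t : ℝ := Real.exp (-x) with ht_def
  have ht0 : 0 < t := Real.exp_pos _
  have ht1 : t < 1 := Real.exp_lt_one_iff.mpr (by linarith)
  set z : ℂ := (t : ℂ) * Complex.exp (θ * Complex.I) with hz_def
  have hznorm : ‖z‖ = t := by
    rw [hz_def, norm_mul, Complex.norm_exp_ofReal_mul_I, mul_one, Complex.norm_real,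
      Real.norm_of_nonneg ht0.le]
  have H := Complex.hasSum_taylorSeries_log (z := z) (by rw [hznorm]; exact ht1)
  have Hre := Complex.reCLM.hasSum H
  have hterm : ∀ n : ℕ, Complex.reCLM ((-1) ^ (n + 1) * z ^ n / n)
      = (-1) ^ (n + 1) * t ^ n * Real.cos (n * θ) / n := by
    intro n
    have hzn : z ^ n = (t ^ n : ℝ) * Complex.exp ((n * θ : ℝ) * Complex.I) := by
      rw [hz_def, mul_pow, ← Complex.exp_nat_mul]
      push_cast
      ring_nf
    have : ((-1 : ℂ)) ^ (n + 1) * z ^ n / n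
        = (((-1 : ℝ) ^ (n + 1) * t ^ n / n : ℝ) : ℂ) * Complex.exp ((n * θ : ℝ) * Complex.I) := by
      rw [hzn]
      push_cast
      ring
    rw [Complex.reCLM_apply, this, Complex.re_ofReal_mul, Complex.exp_ofReal_mul_I_re]
    ring
  have hne : (1 : ℂ) + z ≠ 0 := by
    intro h
    have h0 : ‖(1 : ℂ) + z‖ = 0 := by rw [h, norm_zero]
    have h2 : (1 : ℝ) - ‖z‖ ≤ ‖(1:ℂ) + z‖ := by
      have := norm_sub_norm_le (1 : ℂ) (-z)
      simp only [sub_neg_eq_add, norm_one, norm_neg] at this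
      linarith
    rw [hznorm] at h2
    linarith [h0 ▸ h2]
  have hre_val : (Complex.log (1 + z)).re = Real.log (‖(1 + z : ℂ)‖) := Complex.log_re _
  have Hre' : HasSum (fun n : ℕ ↦ (-1) ^ (n + 1) * t ^ n * Real.cos (n * θ) / n)
      (Real.log (‖(1 + z : ℂ)‖)) := by
    rw [← hre_val]
    exact Hre.congr_fun (fun n ↦ (hterm n).symm)
  have Habs : (‖(1 + z : ℂ)‖) ^ 2 = 1 + 2 * t * Real.cos θ + t ^ 2 := by
    rw [Complex.sq_norm, Complex.normSq_apply]
    have h1 : (1 + z).re = 1 + t * Real.cos θ := by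
      simp [hz_def, Complex.exp_ofReal_mul_I_re]
    have h2 : (1 + z).im = t * Real.sin θ := by
      simp [hz_def, Complex.exp_ofReal_mul_I_im]
    rw [h1, h2]
    nlinarith [Real.sin_sq_add_cos_sq θ]
  have habspos : 0 < ‖(1 + z : ℂ)‖ := by
    exact norm_pos_iff.mpr hne
  have hval : 2 * Real.log (‖(1 + z : ℂ)‖) = Real.log (1 + 2 * t * Real.cos θ + t ^ 2) := by
    rw [← Habs, Real.log_pow]
    push_cast; ring
  have Hfin := Hre'.mul_left 2
  rw [hval] at Hfin
  have key : Real.log (Real.cos θ + Real.cosh x) - (x - Real.log 2)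
      = Real.log (1 + 2 * t * Real.cos θ + t ^ 2) := by
    have hpos : (0:ℝ) < 1 + 2 * t * Real.cos θ + t ^ 2 := by
      nlinarith [Real.neg_one_le_cos θ, Real.cos_le_one θ, sq_nonneg (1 - t)]
    have hfact : Real.cos θ + Real.cosh x = Real.exp x / 2 * (1 + 2 * t * Real.cos θ + t ^ 2) := by
      rw [Real.cosh_eq, ht_def]
      have hx1 : Real.exp x * Real.exp (-x) = 1 := by
        rw [← Real.exp_add]; simp
      field_simp
      nlinarith [hx1]
    rw [hfact, Real.log_mul (by positivity) hpos.ne', Real.log_div (by positivity) (by norm_num),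
      Real.log_exp]
    ring
  rw [key]
  exact Hfin.congr_fun (fun n ↦ by ring)

lemma integrable_aux {s : ℝ} (hs : 0 < s) {r : ℝ} (hr : 0 < r) :
    IntegrableOn (fun x : ℝ ↦ x ^ (s - 1) * Real.exp (-(r * x))) (Set.Ioi 0) := by
  have h2 : IntegrableOn (fun x : ℝ ↦ Real.exp (-(r * x)) * (r * x) ^ (s - 1)) (Set.Ioi 0) := by
    have := (integrableOn_Ioi_comp_mul_left_iff
      (fun x : ℝ ↦ Real.exp (-x) * x ^ (s - 1)) 0 hr).mpr
    rw [mul_zero] at this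
    exact this (Real.GammaIntegral_convergent hs)
  have h3 : IntegrableOn (fun x : ℝ ↦ ((r:ℝ) ^ (s-1))⁻¹ * (Real.exp (-(r * x)) * (r * x) ^ (s - 1)))
      (Set.Ioi 0) := h2.const_mul _
  refine IntegrableOn.congr_fun h3 (fun x hx ↦ ?_) measurableSet_Ioi
  rw [Set.mem_Ioi] at hx
  rw [Real.mul_rpow hr.le hx.le]
  field_simp [(Real.rpow_pos_of_pos hr (s-1)).ne']

lemma term_eq (s α β : ℝ) (hs : 0 < s) (n : ℕ) :
    ((2 * ((-1:ℝ)^(n+1) * (Real.cos (n*α) - Real.cos (n*β)) / n) *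
        ((1/(n:ℝ))^s * Real.Gamma s) : ℝ) : ℂ)
    = (-2 * Complex.Gamma (s:ℂ)) *
      (((Real.cos (2*π*((α+π)/(2*π))*n) : ℝ) : ℂ) / (n:ℂ)^((s:ℂ)+1) -
       ((Real.cos (2*π*((β+π)/(2*π))*n) : ℝ) : ℂ) / (n:ℂ)^((s:ℂ)+1)) := by
  have hπ := Real.pi_pos
  have hred : ∀ θ : ℝ, Real.cos (2*π*((θ+π)/(2*π))*n) = (-1:ℝ)^n * Real.cos (n*θ) := by
    intro θ
    have harg : 2*π*((θ+π)/(2*π))*(n:ℝ) = (n:ℝ)*π - (-(n*θ)) := by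
      field_simp; ring
    rw [harg, Real.cos_nat_mul_pi_sub, Real.cos_neg]
  rcases Nat.eq_zero_or_pos n with rfl | hn
  · have : ((0:ℂ))^((s:ℂ)+1) = 0 := by
      apply Complex.zero_cpow
      intro h
      have := congrArg Complex.re h
      simp at this; linarith
    simp [this]
  · have hn0 : (0:ℝ) < (n:ℝ) := by exact_mod_cast hn
    have hinv : ((1/(n:ℝ))^s * (1/(n:ℝ)) : ℝ) = (((n:ℝ))^(s+1))⁻¹ := by
      rw [Real.rpow_add hn0, Real.rpow_one, one_div, Real.inv_rpow hn0.le, mul_inv]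
    have hpow : (n:ℂ)^((s:ℂ)+1) = ((((n:ℝ))^(s+1) : ℝ) : ℂ) := by
      rw [Complex.ofReal_cpow hn0.le]
      push_cast
      ring_nf
    rw [hred α, hred β]
    have hrealid : 2 * ((-1:ℝ)^(n+1) * (Real.cos (n*α) - Real.cos (n*β)) / n) *
        ((1/(n:ℝ))^s * Real.Gamma s)
        = (-2 * Real.Gamma s) * ((-1:ℝ)^n * Real.cos (n*α) - (-1:ℝ)^n * Real.cos (n*β)) *
          (((n:ℝ))^(s+1))⁻¹ := by
      rw [show ((-1:ℝ))^(n+1) = -(-1:ℝ)^n by ring, ← hinv]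
      ring
    rw [hrealid, hpow]
    push_cast [← Complex.Gamma_ofReal]
    ring

lemma const_eq (s : ℝ) (hs : 0 < s) (hsin : Real.sin (π * s / 2) ≠ 0) :
    (((2:ℝ) ^ s * π ^ (s + 1) * (1 / Real.sin (π * s / 2)) / s : ℝ) : ℂ) *
      (2 * (2 * (π:ℂ)) ^ (-((s:ℂ) + 1)) * Complex.Gamma ((s:ℂ) + 1) *
        Complex.cos ((π:ℂ) * ((s:ℂ) + 1) / 2)) * 2 = -2 * Complex.Gamma (s:ℂ) := by
  have hπ := Real.pi_pos
  have hcos : Complex.cos ((π:ℂ) * ((s:ℂ) + 1) / 2) = -((Real.sin (π * s / 2) : ℝ) : ℂ) := by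
    rw [show (π:ℂ) * ((s:ℂ) + 1) / 2 = (π:ℂ) * (s:ℂ) / 2 + (π:ℂ) / 2 by ring,
      Complex.cos_add_pi_div_two]
    push_cast
    ring_nf
  have hΓ : Complex.Gamma ((s:ℂ) + 1) = (s:ℂ) * Complex.Gamma (s:ℂ) :=
    Complex.Gamma_add_one _ (by exact_mod_cast hs.ne')
  have hpow : (2 * (π:ℂ)) ^ (-((s:ℂ) + 1)) = ((((2 * π) ^ (s + 1) : ℝ) : ℂ))⁻¹ := by
    rw [Complex.cpow_neg, Complex.ofReal_cpow (by positivity)]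
    push_cast
    ring_nf
  have key : (2:ℝ) ^ s * π ^ (s + 1) = (2 * π) ^ (s + 1) / 2 := by
    rw [Real.mul_rpow (by norm_num) hπ.le, Real.rpow_add two_pos, Real.rpow_one]
    ring
  rw [hcos, hΓ, hpow, key]
  have hR : (((2 * π) ^ (s + 1) : ℝ) : ℂ) ≠ 0 := by
    exact_mod_cast (Real.rpow_pos_of_pos (by positivity) (s+1)).ne'
  have hs' : ((s:ℂ)) ≠ 0 := by exact_mod_cast hs.ne'
  have hsin' : ((Real.sin (π*s/2) : ℝ) : ℂ) ≠ 0 := by exact_mod_cast hsin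
  set R := (((2 * π) ^ (s + 1) : ℝ) : ℂ)
  set S := ((Real.sin (π*s/2) : ℝ) : ℂ)
  rw [show (((2 * π) ^ (s + 1) / 2 * (1 / Real.sin (π * s / 2)) / s : ℝ) : ℂ)
      = R / 2 * (1 / S) / (s:ℂ) by push_cast [R, S]; ring]
  field_simp

end Aux

theorem stmt_11 (s α β : ℝ) (hs : 0 < s) (hs' : ∀ n : ℕ, 0 < n → s ≠ 2 * n)
    (hα : |α| < π) (hβ : |β| < π) :
    ((∫ x in Set.Ioi (0 : ℝ),
        x ^ (s - 1) * Real.log ((Real.cos α + Real.cosh x) / (Real.cos β + Real.cosh x)) : ℝ)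
      : ℂ) =
      (((2 : ℝ) ^ s * π ^ (s + 1) * (1 / Real.sin (π * s / 2)) / s : ℝ) : ℂ) *
        (hurwitzZeta (((π - α) / (2 * π) : ℝ) : UnitAddCircle) (-(s : ℂ)) +
         hurwitzZeta (((α + π) / (2 * π) : ℝ) : UnitAddCircle) (-(s : ℂ)) -
         hurwitzZeta (((π - β) / (2 * π) : ℝ) : UnitAddCircle) (-(s : ℂ)) -
         hurwitzZeta (((β + π) / (2 * π) : ℝ) : UnitAddCircle) (-(s : ℂ))) := by

  have hπ := Real.pi_pos
  have hsin : Real.sin (π * s / 2) ≠ 0 := by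
    intro h
    obtain ⟨n, hn⟩ := Real.sin_eq_zero_iff.mp h
    have hsn : s = 2 * (n:ℝ) := by
      have := mul_left_cancel₀ hπ.ne' (by linarith : π * (2 * (n:ℝ)) = π * s)
      linarith
    have hnpos : 0 < n := by
      by_contra hcon
      push_neg at hcon
      have : (n:ℝ) ≤ 0 := by exact_mod_cast hcon
      linarith
    refine hs' n.toNat (by omega) ?_
    rw [hsn]
    congr 1
    exact_mod_cast (Int.toNat_of_nonneg hnpos.le).symm
  have hpos : ∀ (θ x : ℝ), 0 < x → 0 < Real.cos θ + Real.cosh x := by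
    intro θ x hx
    have h1 : 1 < Real.cosh x := Real.one_lt_cosh.mpr hx.ne'
    nlinarith [Real.neg_one_le_cos θ]
  set c : ℕ → ℝ := fun n ↦ 2 * ((-1:ℝ)^(n+1) * (Real.cos (n*α) - Real.cos (n*β)) / n) with hc
  set g : ℕ → ℝ → ℝ := fun n x ↦ c n * (x ^ (s-1) * Real.exp (-(n*x))) with hg
  have hc0 : c 0 = 0 := by simp [hc]
  -- integrability of each term
  have hint : ∀ n : ℕ, Integrable (g n) (volume.restrict (Set.Ioi 0)) := by
    intro n
    rcases Nat.eq_zero_or_pos n with rfl | hn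
    · have : g 0 = fun _ ↦ (0:ℝ) := by funext x; simp [hg, hc0]
      rw [this]
      exact integrable_zero _ _ _
    · exact (integrable_aux hs (by exact_mod_cast hn : (0:ℝ) < (n:ℝ))).const_mul (c n)
  -- value of each integral
  have hGpos : 0 < Real.Gamma s := Real.Gamma_pos_of_pos hs
  have hval : ∀ n : ℕ, ∫ x in Set.Ioi (0:ℝ), g n x = c n * ((1/(n:ℝ)) ^ s * Real.Gamma s) := by
    intro n
    rcases Nat.eq_zero_or_pos n with rfl | hn
    · simp [hg, hc0]
    · simp only [hg]
      rw [MeasureTheory.integral_const_mul,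
        Real.integral_rpow_mul_exp_neg_mul_Ioi hs (by exact_mod_cast hn : (0:ℝ) < (n:ℝ))]
  -- value of the integral of the norm
  have hnormval : ∀ n : ℕ, (∫ x in Set.Ioi (0:ℝ), ‖g n x‖)
      = |c n| * ((1/(n:ℝ)) ^ s * Real.Gamma s) := by
    intro n
    have heq : ∀ x ∈ Set.Ioi (0:ℝ), ‖g n x‖ = |c n| * (x ^ (s-1) * Real.exp (-(n*x))) := by
      intro x hx
      rw [Set.mem_Ioi] at hx
      rw [hg]
      simp only [Real.norm_eq_abs, abs_mul]
      rw [abs_of_nonneg (Real.rpow_nonneg hx.le (s-1)), abs_of_nonneg (Real.exp_nonneg _)]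
    rw [MeasureTheory.setIntegral_congr_fun measurableSet_Ioi heq]
    rcases Nat.eq_zero_or_pos n with rfl | hn
    · simp [hc0]
    · rw [MeasureTheory.integral_const_mul,
        Real.integral_rpow_mul_exp_neg_mul_Ioi hs (by exact_mod_cast hn : (0:ℝ) < (n:ℝ))]
  -- summability of the norms
  have hsummable : Summable (fun n : ℕ ↦ |c n| * ((1/(n:ℝ)) ^ s * Real.Gamma s)) := by
    have hbound : ∀ n : ℕ, |c n| * ((1/(n:ℝ)) ^ s * Real.Gamma s)
        ≤ 4 * Real.Gamma s * ((1/(n:ℝ)) ^ (s+1)) := by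
      intro n
      rcases Nat.eq_zero_or_pos n with rfl | hn
      · simp [hc0]
        rw [Real.zero_rpow (by linarith : s + 1 ≠ 0)]
        simp
      · have hn0 : (0:ℝ) < (n:ℝ) := by exact_mod_cast hn
        have h1n : (0:ℝ) < 1/(n:ℝ) := by positivity
        have hcabs : |c n| ≤ 4 * (1/(n:ℝ)) := by
          have hd : |Real.cos (n*α) - Real.cos (n*β)| ≤ 2 := by
            rw [abs_le]
            constructor <;>
              nlinarith [Real.neg_one_le_cos ((n:ℝ)*α), Real.cos_le_one ((n:ℝ)*α),
                Real.neg_one_le_cos ((n:ℝ)*β), Real.cos_le_one ((n:ℝ)*β)]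
          rw [hc]
          simp only [abs_mul, abs_div, abs_pow, abs_neg, abs_one, one_pow, one_mul, abs_two,
            Nat.abs_cast]
          calc 2 * (|Real.cos (n*α) - Real.cos (n*β)| / (n:ℝ)) ≤ 2 * (2 / (n:ℝ)) := by
                gcongr
            _ = 4 * (1/(n:ℝ)) := by ring
        have hsplit : (1/(n:ℝ)) ^ (s+1) = (1/(n:ℝ)) ^ s * (1/(n:ℝ)) := by
          rw [Real.rpow_add h1n, Real.rpow_one]
        rw [hsplit]
        calc |c n| * ((1/(n:ℝ)) ^ s * Real.Gamma s)
            ≤ (4 * (1/(n:ℝ))) * ((1/(n:ℝ)) ^ s * Real.Gamma s) := by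
              apply mul_le_mul_of_nonneg_right hcabs
              positivity
          _ = 4 * Real.Gamma s * ((1/(n:ℝ)) ^ s * (1/(n:ℝ))) := by ring
    have hbsum : Summable (fun n : ℕ ↦ 4 * Real.Gamma s * ((1/(n:ℝ)) ^ (s+1))) := by
      have : ∀ n : ℕ, (1/(n:ℝ)) ^ (s+1) = 1/(n:ℝ)^(s+1) := by
        intro n
        rw [one_div, one_div, Real.inv_rpow (Nat.cast_nonneg n)]
      simp_rw [this]
      exact (Real.summable_one_div_nat_rpow.mpr (by linarith)).mul_left _
    refine Summable.of_nonneg_of_le (fun n ↦ by positivity) hbound hbsum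
  -- interchange sum and integral
  have hHasSumInt : HasSum (fun n : ℕ ↦ ∫ x in Set.Ioi (0:ℝ), g n x)
      (∫ x in Set.Ioi (0:ℝ), ∑' n : ℕ, g n x) := by
    apply MeasureTheory.hasSum_integral_of_summable_integral_norm hint
    apply hsummable.congr
    intro n
    exact (hnormval n).symm
  -- identify the pointwise sum with the integrand
  have hptwise : ∀ x ∈ Set.Ioi (0:ℝ), (∑' n : ℕ, g n x)
      = x ^ (s-1) * Real.log ((Real.cos α + Real.cosh x) / (Real.cos β + Real.cosh x)) := by
    intro x hx
    rw [Set.mem_Ioi] at hx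
    have H := fun θ : ℝ ↦ hasSum_log_aux (θ := θ) hx
    have hlog : HasSum (fun n : ℕ ↦ 2 * ((-1:ℝ) ^ (n + 1) * Real.exp (-x) ^ n *
        (Real.cos (n * α) - Real.cos (n * β)) / n))
        (Real.log ((Real.cos α + Real.cosh x) / (Real.cos β + Real.cosh x))) := by
      have h := (H α).sub (H β)
      rw [Real.log_div (hpos α x hx).ne' (hpos β x hx).ne']
      have heq : (Real.log (Real.cos α + Real.cosh x) - (x - Real.log 2)) -
          (Real.log (Real.cos β + Real.cosh x) - (x - Real.log 2)) =
          Real.log (Real.cos α + Real.cosh x) - Real.log (Real.cos β + Real.cosh x) := by ring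
      rw [heq] at h
      exact h.congr_fun (fun n ↦ by ring)
    have hmul := hlog.mul_left (x ^ (s-1))
    have hfun : ∀ n : ℕ, g n x = x ^ (s-1) * (2 * ((-1:ℝ) ^ (n + 1) * Real.exp (-x) ^ n *
        (Real.cos (n * α) - Real.cos (n * β)) / n)) := by
      intro n
      rw [hg, hc]
      simp only
      rw [show Real.exp (-(n*x)) = Real.exp (-x) ^ n by
        rw [← Real.exp_nat_mul]; congr 1; ring]
      ring
    rw [show (fun n : ℕ ↦ g n x) = fun n : ℕ ↦ x ^ (s-1) * (2 * ((-1:ℝ) ^ (n + 1) *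
        Real.exp (-x) ^ n * (Real.cos (n * α) - Real.cos (n * β)) / n)) from funext hfun]
    exact hmul.tsum_eq
  -- hence the LHS integral is the sum of the series
  have hLHS : HasSum (fun n : ℕ ↦ ((c n * ((1/(n:ℝ)) ^ s * Real.Gamma s) : ℝ) : ℂ))
      ((∫ x in Set.Ioi (0:ℝ),
        x ^ (s - 1) * Real.log ((Real.cos α + Real.cosh x) / (Real.cos β + Real.cosh x))
        : ℝ) : ℂ) := by
    have h1 : (∫ x in Set.Ioi (0:ℝ),
        x ^ (s - 1) * Real.log ((Real.cos α + Real.cosh x) / (Real.cos β + Real.cosh x)))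
        = ∫ x in Set.Ioi (0:ℝ), ∑' n : ℕ, g n x :=
      (MeasureTheory.setIntegral_congr_fun measurableSet_Ioi hptwise).symm
    rw [h1]
    have h2 : HasSum (fun n : ℕ ↦ c n * ((1/(n:ℝ)) ^ s * Real.Gamma s))
        (∫ x in Set.Ioi (0:ℝ), ∑' n : ℕ, g n x) :=
      hHasSumInt.congr_fun (fun n ↦ (hval n).symm)
    exact Complex.ofRealCLM.hasSum h2
  -- now the right-hand side
  have hcoe : ∀ θ : ℝ, ((((π - θ) / (2 * π) : ℝ)) : UnitAddCircle)
      = -((((θ + π) / (2 * π) : ℝ)) : UnitAddCircle) := by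
    intro θ
    rw [show ((π - θ) / (2 * π) : ℝ) = 1 - (θ + π) / (2 * π) by field_simp; ring]
    rw [eq_neg_iff_add_eq_zero, ← AddCircle.coe_add]
    norm_num
  have hfe : ∀ θ : ℝ, hurwitzZetaEven ((((θ + π) / (2 * π) : ℝ)) : UnitAddCircle) (-(s:ℂ)) =
      2 * (2 * (π:ℂ)) ^ (-((s:ℂ)+1)) * Complex.Gamma ((s:ℂ)+1) *
        Complex.cos ((π:ℂ) * ((s:ℂ)+1) / 2) *
        cosZeta ((((θ + π) / (2 * π) : ℝ)) : UnitAddCircle) ((s:ℂ)+1) := by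
    intro θ
    have hsne : ∀ n : ℕ, ((s:ℂ)+1) ≠ -n := by
      intro n h
      have := congrArg Complex.re h
      simp at this
      have : (0:ℝ) ≤ (n:ℝ) := n.cast_nonneg
      linarith
    have h := hurwitzZetaEven_one_sub ((((θ + π) / (2 * π) : ℝ)) : UnitAddCircle) hsne
      (Or.inr (by intro h; have := congrArg Complex.re h; simp at this; linarith))
    rw [show (1 : ℂ) - ((s:ℂ)+1) = -(s:ℂ) by ring] at h
    exact h
  have hre1 : 1 < ((s:ℂ)+1).re := by simp; linarith
  have hcosA := hasSum_nat_cosZeta ((α + π) / (2 * π)) hre1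
  have hcosB := hasSum_nat_cosZeta ((β + π) / (2 * π)) hre1
  have hRHSsum : HasSum (fun n : ℕ ↦ (-2 * Complex.Gamma (s:ℂ)) *
      (((Real.cos (2*π*((α+π)/(2*π))*n) : ℝ) : ℂ) / (n:ℂ)^((s:ℂ)+1) -
       ((Real.cos (2*π*((β+π)/(2*π))*n) : ℝ) : ℂ) / (n:ℂ)^((s:ℂ)+1)))
      ((-2 * Complex.Gamma (s:ℂ)) *
        (cosZeta ((((α + π) / (2 * π) : ℝ)) : UnitAddCircle) ((s:ℂ)+1) -
         cosZeta ((((β + π) / (2 * π) : ℝ)) : UnitAddCircle) ((s:ℂ)+1))) :=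
    (hcosA.sub hcosB).mul_left _
  -- identify LHS series with RHS series
  have hseries_eq := hLHS.unique (hRHSsum.congr_fun (fun n ↦ by rw [hc]; exact term_eq s α β hs n))
  rw [hseries_eq]
  -- finally, show the stated RHS equals (-2 Γ s) * (cosZeta A - cosZeta B)
  rw [hcoe α, hcoe β]
  rw [show ∀ t : ℂ, ∀ A B : UnitAddCircle,
      hurwitzZeta (-A) t + hurwitzZeta A t - hurwitzZeta (-B) t - hurwitzZeta B t
      = 2 * hurwitzZetaEven A t - 2 * hurwitzZetaEven B t from
    fun t A B ↦ by rw [hurwitzZetaEven_eq, hurwitzZetaEven_eq]; ring]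
  rw [hfe α, hfe β]
  have hconst := const_eq s hs hsin
  set C := (((2:ℝ) ^ s * π ^ (s + 1) * (1 / Real.sin (π * s / 2)) / s : ℝ) : ℂ)
  set K := 2 * (2 * (π:ℂ)) ^ (-((s:ℂ)+1)) * Complex.Gamma ((s:ℂ)+1) *
      Complex.cos ((π:ℂ) * ((s:ℂ)+1) / 2)
  set ZA := cosZeta ((((α + π) / (2 * π) : ℝ)) : UnitAddCircle) ((s:ℂ)+1)
  set ZB := cosZeta ((((β + π) / (2 * π) : ℝ)) : UnitAddCircle) ((s:ℂ)+1)
  calc (-2 * Complex.Gamma (s:ℂ)) * (ZA - ZB)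
      = (C * K * 2) * (ZA - ZB) := by rw [hconst]
    _ = C * (2 * (K * ZA) - 2 * (K * ZB)) := by ring
end

section
/- Let α > 0 and m be real numbers. Then ∑_{n=−∞}^{∞} e^{−n·α}·sech²(m + n·α) = (π·e^{m}/α²)·∑_{n=−∞}^{∞} sech(π²·n/α)·( α·cos(2·π·m·n/α) − 2·π·n·sin(2·π·m·n/α) ), where both doubly infinite series converge absolutely. -/
open Real MeasureTheory Filter Asymptotics Set
open scoped FourierTransform

/-- The real hyperbolic secant. -/
noncomputable def sech (x : ℝ) : ℝ := 1 / Real.cosh x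

lemma sech_pos (x : ℝ) : 0 < sech x := by
  unfold sech; positivity

lemma sech_le (x : ℝ) : sech x ≤ 2 * Real.exp (-|x|) := by
  unfold sech
  rw [div_le_iff₀ (Real.cosh_pos x)]
  have h1 : Real.exp |x| ≤ 2 * Real.cosh x := by
    rw [Real.cosh_eq]
    rcases abs_cases x with ⟨h, _⟩ | ⟨h, _⟩ <;> rw [h] <;>
      [linarith [Real.exp_pos (-x)]; linarith [Real.exp_pos x]]
  calc (1:ℝ) = Real.exp (-|x|) * Real.exp |x| := by
        rw [← Real.exp_add]; simp
    _ ≤ Real.exp (-|x|) * (2 * Real.cosh x) := by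
        have := Real.exp_pos (-|x|); nlinarith
    _ = 2 * Real.exp (-|x|) * Real.cosh x := by ring

-- summability over ℤ of (C + D|n|) * exp (-c * |n|)
lemma summable_aux {c : ℝ} (hc : 0 < c) (C D : ℝ) :
    Summable (fun n : ℤ => (C + D * |(n:ℝ)|) * Real.exp (-c * |(n:ℝ)|)) := by
  have key : Summable (fun n : ℕ => (C + D * (n:ℝ)) * Real.exp (-c * (n:ℝ))) := by
    have hr : ‖Real.exp (-c)‖ < 1 := by
      rw [Real.norm_eq_abs, abs_of_pos (Real.exp_pos _)]
      exact Real.exp_lt_one_iff.mpr (by linarith)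
    have h1 : Summable (fun n : ℕ => (n:ℝ) * Real.exp (-c) ^ n) := by
      simpa using summable_pow_mul_geometric_of_norm_lt_one 1 hr
    have h0 : Summable (fun n : ℕ => Real.exp (-c) ^ n) :=
      summable_geometric_of_norm_lt_one hr
    have : Summable (fun n : ℕ => C * Real.exp (-c) ^ n + D * ((n:ℝ) * Real.exp (-c) ^ n)) :=
      (h0.mul_left C).add (h1.mul_left D)
    refine this.congr fun n => ?_
    rw [← Real.exp_nat_mul]
    ring_nf
  apply Summable.of_nat_of_neg <;> simpa using key
-- pointwise bound for LHS term
lemma lhs_bound (α m : ℝ) (hα : 0 < α) (t : ℝ) :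
    |Real.exp (-t * α) * sech (m + t * α) ^ 2| ≤
      (4 * Real.exp (2 * |m|) + 0 * |t|) * Real.exp (-α * |t|) := by
  rw [abs_of_nonneg (by positivity : (0:ℝ) ≤ Real.exp (-t * α) * sech (m + t * α) ^ 2)]
  set x := m + t*α with hx
  have hE : Real.exp (-2 * |x|) = Real.exp (-|x|) ^ 2 := by
    rw [← Real.exp_nat_mul]; norm_num
  have h1 : sech x ^ 2 ≤ 4 * Real.exp (-2 * |x|) := by
    rw [hE]
    have h := sech_le x
    have hp := (sech_pos x).le
    nlinarith [Real.exp_pos (-|x|)]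
  have habs : |t| * α ≤ |m| + |x| := by
    have h4 : |t*α| ≤ |x| + |m| := by
      have : t*α = x - m := by rw [hx]; ring
      rw [this]
      exact abs_sub _ _
    rw [abs_mul, abs_of_pos hα] at h4
    linarith
  calc Real.exp (-t * α) * sech x ^ 2
      ≤ Real.exp (-t * α) * (4 * Real.exp (-2 * |x|)) := by
        have := (Real.exp_pos (-t * α)).le
        have := sq_nonneg (sech x)
        nlinarith
    _ = 4 * Real.exp (-t * α + -2 * |x|) := by rw [Real.exp_add]; ring
    _ ≤ (4 * Real.exp (2 * |m|) + 0 * |t|) * Real.exp (-α * |t|) := by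
        simp only [zero_mul, add_zero]
        rw [mul_assoc, ← Real.exp_add]
        have hn : -t * α ≤ |t| * α := by
          have : -t ≤ |t| := neg_le_abs _
          nlinarith
        have hax : 0 ≤ |x| := abs_nonneg x
        have hkey : -t * α + -2 * |x| ≤ 2 * |m| + -α * |t| := by nlinarith
        exact mul_le_mul_of_nonneg_left (Real.exp_le_exp.mpr hkey) (by norm_num)

lemma summable_lhs (α m : ℝ) (hα : 0 < α) :
    Summable (fun n : ℤ => Real.exp (-(n : ℝ) * α) * sech (m + (n : ℝ) * α) ^ 2) := by
  apply Summable.of_abs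
  apply Summable.of_nonneg_of_le (fun n => abs_nonneg _) (fun n : ℤ => lhs_bound α m hα (n:ℝ))
  exact summable_aux hα _ _

lemma summable_sech_trig (α : ℝ) (hα : 0 < α) (F : ℤ → ℝ)
    (hF : ∀ n : ℤ, |F n| ≤ α + 2 * π * |(n:ℝ)|) :
    Summable (fun n : ℤ => sech (π ^ 2 * (n : ℝ) / α) * F n) := by
  apply Summable.of_abs
  have hle : ∀ n : ℤ, |sech (π ^ 2 * (n : ℝ) / α) * F n| ≤
      (2*α + (4*π) * |(n:ℝ)|) * Real.exp (-(π^2/α) * |(n:ℝ)|) := by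
    intro n
    rw [abs_mul]
    have h1 : |sech (π ^ 2 * (n : ℝ) / α)| ≤ 2 * Real.exp (-(π^2/α) * |(n:ℝ)|) := by
      rw [abs_of_pos (sech_pos _)]
      have := sech_le (π ^ 2 * (n : ℝ) / α)
      have he : |π ^ 2 * (n : ℝ) / α| = (π^2/α) * |(n:ℝ)| := by
        rw [abs_div, abs_mul, abs_of_pos hα, abs_of_pos (by positivity : (0:ℝ) < π^2)]
        ring
      rw [he] at this
      rw [neg_mul] at *
      exact this
    calc |sech _| * |F n| ≤ (2 * Real.exp (-(π^2/α) * |(n:ℝ)|)) * (α + 2*π*|(n:ℝ)|) := by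
          apply mul_le_mul h1 (hF n) (abs_nonneg _) (by positivity)
      _ = (2*α + (4*π) * |(n:ℝ)|) * Real.exp (-(π^2/α) * |(n:ℝ)|) := by ring
  exact Summable.of_nonneg_of_le (fun n => abs_nonneg _) hle (summable_aux (by positivity) _ _)

lemma tendsto_pow_exp_scaled {c : ℝ} (hc : 0 < c) (n : ℕ) :
    Tendsto (fun x : ℝ => x ^ n * Real.exp (-c * x)) atTop (nhds 0) := by
  have h := Real.tendsto_pow_mul_exp_neg_atTop_nhds_zero n
  have hcx : Tendsto (fun x : ℝ => c * x) atTop atTop :=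
    Tendsto.const_mul_atTop hc tendsto_id
  have h2 := (h.comp hcx).const_mul ((c ^ n)⁻¹)
  rw [mul_zero] at h2
  apply h2.congr
  intro x
  simp only [Function.comp]
  rw [mul_pow]
  have : (c:ℝ) ^ n ≠ 0 := by positivity
  field_simp

lemma decay_isBigO {c : ℝ} (hc : 0 < c) (C D : ℝ) :
    (fun x : ℝ => (C + D * |x|) * Real.exp (-c * |x|)) =O[Filter.cocompact ℝ]
      (fun x : ℝ => |x| ^ (-2 : ℝ)) := by
  rw [cocompact_eq_atBot_atTop]
  have hTop : (fun x : ℝ => (C + D * |x|) * Real.exp (-c * |x|)) =O[atTop]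
      (fun x : ℝ => |x| ^ (-2 : ℝ)) := by
    apply IsLittleO.isBigO
    rw [isLittleO_iff_tendsto']
    · have key : Tendsto (fun x : ℝ => C * (x ^ 2 * Real.exp (-c * x)) +
          D * (x ^ 3 * Real.exp (-c * x))) atTop (nhds 0) := by
        have := ((tendsto_pow_exp_scaled hc 2).const_mul C).add
          ((tendsto_pow_exp_scaled hc 3).const_mul D)
        simpa using this
      apply Tendsto.congr' ?_ key
      filter_upwards [eventually_ge_atTop (1:ℝ)] with x hx
      have hx0 : (0:ℝ) < x := by linarith
      have habs : |x| = x := abs_of_pos hx0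
      have hrpow : |x| ^ (-2:ℝ) = (x ^ (2:ℕ))⁻¹ := by
        rw [habs, ← Real.rpow_natCast x 2, ← Real.rpow_neg hx0.le]
        norm_num
      rw [hrpow, habs, div_eq_mul_inv, inv_inv]
      ring
    · filter_upwards [eventually_ge_atTop (1:ℝ)] with x hx h
      have hx0 : (0:ℝ) < x := by linarith
      have : (0:ℝ) < |x| ^ (-2:ℝ) := Real.rpow_pos_of_pos (by rw [abs_of_pos hx0]; exact hx0) _
      exact absurd h this.ne'
  apply IsBigO.sup
  · have h2 := hTop.comp_tendsto tendsto_neg_atBot_atTop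
    have : ((fun x : ℝ => (C + D * |x|) * Real.exp (-c * |x|)) ∘ (fun x : ℝ => -x)) =
        (fun x : ℝ => (C + D * |x|) * Real.exp (-c * |x|)) := by
      funext x; simp [Function.comp, abs_neg]
    rw [this] at h2
    have h3 : ((fun x : ℝ => |x| ^ (-2:ℝ)) ∘ (fun x : ℝ => -x)) =
        (fun x : ℝ => |x| ^ (-2:ℝ)) := by
      funext x; simp [Function.comp, abs_neg]
    rwa [h3] at h2
  · exact hTop

set_option maxHeartbeats 1000000 in
lemma fourier_sech (α m ξ : ℝ) (hα : 0 < α) :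
    𝓕 (fun x : ℝ => ((Real.exp (-x * α) * sech (m + x * α) ^ 2 : ℝ) : ℂ)) ξ =
      ((π * Real.exp m / α ^ 2 : ℝ) : ℂ) * ((α : ℂ) + ((2 * π * ξ : ℝ) : ℂ) * Complex.I) *
        Complex.exp (((2 * π * ξ * m / α : ℝ) : ℂ) * Complex.I) /
        ((Real.cosh (π ^ 2 * ξ / α) : ℝ) : ℂ) := by
  set s : ℂ := 1 + ((2 * π * ξ / α : ℝ) : ℂ) * Complex.I with hs
  have hs_re : s.re = 1 := by simp [hs]
  have hs_ne : s ≠ 0 := by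
    intro h
    rw [h] at hs_re
    simp at hs_re
  have hs2_ne : s / 2 ≠ 0 := div_ne_zero hs_ne two_ne_zero
  set φ : ℝ → ℝ := fun w => (Real.log (w / (1 - w)) / 2 - m) / α with hφ
  set φ' : ℝ → ℝ := fun w => 1 / (2 * α * w * (1 - w)) with hφ'
  -- derivative
  have hderiv : ∀ w ∈ Ioo (0:ℝ) 1, HasDerivWithinAt φ (φ' w) (Ioo (0:ℝ) 1) w := by
    intro w hw
    obtain ⟨hw0, hw1⟩ := hw
    have hw1' : 1 - w ≠ 0 := by linarith
    have hr_pos : 0 < w / (1 - w) := div_pos hw0 (by linarith)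
    have h0 : HasDerivAt (fun w : ℝ => w / (1 - w)) (1 / (1 - w) ^ 2) w := by
      have := (hasDerivAt_id w).div ((hasDerivAt_const w (1:ℝ)).sub (hasDerivAt_id w)) hw1'
      refine this.congr_deriv ?_
      simp only [Pi.sub_apply, id]
      ring
    have h1 : HasDerivAt (fun w : ℝ => Real.log (w / (1 - w)))
        (1 / (1 - w) ^ 2 / (w / (1 - w))) w := h0.log hr_pos.ne'
    have h2 := ((h1.div_const 2).sub_const m).div_const α
    refine h2.hasDerivWithinAt.congr_deriv ?_
    rw [hφ']
    field_simp
  -- injectivity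
  have hinj : InjOn φ (Ioo (0:ℝ) 1) := by
    intro a ha b hb hab
    obtain ⟨ha0, ha1⟩ := ha
    obtain ⟨hb0, hb1⟩ := hb
    have hra : (0:ℝ) < a / (1 - a) := div_pos ha0 (by linarith)
    have hrb : (0:ℝ) < b / (1 - b) := div_pos hb0 (by linarith)
    have hlog : Real.log (a / (1 - a)) = Real.log (b / (1 - b)) := by
      rw [hφ] at hab
      field_simp at hab
      linarith
    have hr : a / (1 - a) = b / (1 - b) := by
      rw [← Real.exp_log hra, ← Real.exp_log hrb, hlog]
    have h1a : (1:ℝ) - a ≠ 0 := by linarith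
    have h1b : (1:ℝ) - b ≠ 0 := by linarith
    field_simp at hr
    nlinarith
  -- image
  have himg : φ '' (Ioo (0:ℝ) 1) = univ := by
    apply eq_univ_of_forall
    intro x
    refine ⟨1 / (1 + Real.exp (-2 * (m + α * x))), ⟨by positivity, ?_⟩, ?_⟩
    · rw [div_lt_one (by positivity)]
      linarith [Real.exp_pos (-2 * (m + α * x))]
    · have hE := Real.exp_pos (-2 * (m + α * x))
      have h1 : (1:ℝ) - 1 / (1 + Real.exp (-2 * (m + α * x))) =
          Real.exp (-2 * (m + α * x)) / (1 + Real.exp (-2 * (m + α * x))) := by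
        field_simp
        ring
      have h2 : 1 / (1 + Real.exp (-2 * (m + α * x))) /
          (Real.exp (-2 * (m + α * x)) / (1 + Real.exp (-2 * (m + α * x)))) =
          Real.exp (2 * (m + α * x)) := by
        have h3 : (1:ℝ) + Real.exp (-2 * (m + α * x)) ≠ 0 := by positivity
        rw [div_div_div_cancel_right₀]
        rw [one_div, ← Real.exp_neg]
        · congr 1
          ring
        · exact h3
      show (Real.log (1 / (1 + Real.exp (-2 * (m + α * x))) /
          (1 - 1 / (1 + Real.exp (-2 * (m + α * x))))) / 2 - m) / α = x
      rw [h1, h2, Real.log_exp]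
      field_simp
      ring
  -- change of variables
  have hsub := integral_image_eq_integral_abs_deriv_smul measurableSet_Ioo hderiv hinj
      (fun v : ℝ => Complex.exp (((-2 * π * v * ξ : ℝ) : ℂ) * Complex.I) •
        ((Real.exp (-v * α) * sech (m + v * α) ^ 2 : ℝ) : ℂ))
  rw [himg, MeasureTheory.setIntegral_univ] at hsub
  rw [Real.fourier_real_eq_integral_exp_smul]
  have hker : (∫ v : ℝ, Complex.exp (((-2) * π * v * ξ : ℝ) * Complex.I) •
      ((Real.exp (-v * α) * sech (m + v * α) ^ 2 : ℝ) : ℂ)) =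
      ∫ w in Ioo (0:ℝ) 1, |φ' w| • (fun v : ℝ => Complex.exp (((-2 * π * v * ξ : ℝ) : ℂ) * Complex.I) •
        ((Real.exp (-v * α) * sech (m + v * α) ^ 2 : ℝ) : ℂ)) (φ w) := by
    exact hsub
  rw [hker]
  -- pointwise identity on Ioo 0 1
  set C : ℂ := ((2 * Real.exp m / α : ℝ) : ℂ) * Complex.exp (((2 * π * ξ * m / α : ℝ) : ℂ) * Complex.I) with hC
  have hpt : ∀ w ∈ Ioo (0:ℝ) 1,
      |φ' w| • (fun v : ℝ => Complex.exp (((-2 * π * v * ξ : ℝ) : ℂ) * Complex.I) •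
        ((Real.exp (-v * α) * sech (m + v * α) ^ 2 : ℝ) : ℂ)) (φ w) =
      C * ((w : ℂ) ^ ((1 - s / 2) - 1) * ((1 : ℂ) - (w : ℂ)) ^ ((1 + s / 2) - 1)) := by
    intro w hw
    obtain ⟨hw0, hw1⟩ := hw
    have h1w : (0:ℝ) < 1 - w := by linarith
    have hr : (0:ℝ) < w / (1 - w) := div_pos hw0 h1w
    set u : ℝ := Real.log (w / (1 - w)) / 2 with hu
    have hX : φ w = (u - m) / α := rfl
    have hXα : m + (φ w) * α = u := by rw [hX]; field_simp; ring
    -- sech value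
    have heu2 : Real.exp u * Real.exp u = w / (1 - w) := by
      rw [← Real.exp_add, show u + u = Real.log (w / (1 - w)) by rw [hu]; ring]
      exact Real.exp_log hr
    have henu2 : Real.exp (-u) * Real.exp (-u) = (1 - w) / w := by
      rw [← Real.exp_add, show -u + -u = -Real.log (w / (1 - w)) by rw [hu]; ring,
        ← Real.log_inv, inv_div]
      exact Real.exp_log (div_pos h1w hw0)
    have hmix : Real.exp u * Real.exp (-u) = 1 := by rw [← Real.exp_add]; simp
    have hcosh2 : Real.cosh u ^ 2 = 1 / (4 * (w * (1 - w))) := by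
      rw [Real.cosh_eq]
      have hgoal : ((Real.exp u + Real.exp (-u)) / 2) ^ 2 =
          (w / (1 - w) + 2 + (1 - w) / w) / 4 := by
        have e1 := heu2; have e2 := henu2; have e3 := hmix
        nlinarith [e1, e2, e3]
      rw [hgoal]
      field_simp
      ring
    have hsech : sech (m + (φ w) * α) ^ 2 = 4 * (w * (1 - w)) := by
      rw [hXα]
      unfold sech
      rw [div_pow, one_pow, hcosh2]
      rw [one_div, one_div, inv_inv]
    -- complex exponential part
    have hphi' : |φ' w| = 1 / (2 * α * w * (1 - w)) := by
      rw [hφ']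
      exact abs_of_pos (by positivity)
    have hucoe : ((u : ℝ) : ℂ) = (((Real.log w : ℝ) : ℂ) - ((Real.log (1 - w) : ℝ) : ℂ)) / 2 := by
      rw [hu, Real.log_div hw0.ne' h1w.ne']
      push_cast
      ring
    have hXcoe : ((φ w : ℝ) : ℂ) * (α : ℂ) = ((u : ℝ) : ℂ) - ((m : ℝ) : ℂ) := by
      have hαne : ((α : ℝ) : ℂ) ≠ 0 := by exact_mod_cast hα.ne'
      rw [hX]
      push_cast
      field_simp
    have hexp1 : Complex.exp (((-2 * π * (φ w) * ξ : ℝ) : ℂ) * Complex.I) *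
        ((Real.exp (-(φ w) * α) : ℝ) : ℂ) =
        Complex.exp (-s * ((u : ℝ) : ℂ)) * Complex.exp (s * ((m : ℝ) : ℂ)) := by
      rw [Complex.ofReal_exp, ← Complex.exp_add, ← Complex.exp_add]
      congr 1
      rw [hs]
      have hαne : ((α : ℝ) : ℂ) ≠ 0 := by exact_mod_cast hα.ne'
      have hαinv : ((α:ℝ):ℂ) * ((α:ℝ):ℂ)⁻¹ = 1 := mul_inv_cancel₀ hαne
      push_cast
      linear_combination (-(1:ℂ) - 2*(π:ℂ)*(ξ:ℂ)/(α:ℂ)*Complex.I) * hXcoe +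
        (2*(π:ℂ)*((φ w : ℝ):ℂ)*((ξ:ℝ):ℂ)*Complex.I) * hαinv
    have hcpow : ((w : ℂ) ^ ((1 - s / 2) - 1) * ((1 : ℂ) - (w : ℂ)) ^ ((1 + s / 2) - 1)) =
        Complex.exp (-s * ((u : ℝ) : ℂ)) := by
      have hw_ne : (w : ℂ) ≠ 0 := by exact_mod_cast hw0.ne'
      have h1w_ne : ((1 : ℂ) - (w : ℂ)) ≠ 0 := by
        have : ((1 - w : ℝ) : ℂ) ≠ 0 := by exact_mod_cast h1w.ne'
        push_cast at this ⊢
        exact this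
      rw [Complex.cpow_def_of_ne_zero hw_ne, Complex.cpow_def_of_ne_zero h1w_ne,
        ← Complex.exp_add]
      congr 1
      have hlw : Complex.log (w : ℂ) = ((Real.log w : ℝ) : ℂ) := (Complex.ofReal_log hw0.le).symm
      have hl1w : Complex.log ((1 : ℂ) - (w : ℂ)) = ((Real.log (1 - w) : ℝ) : ℂ) := by
        rw [show (1 : ℂ) - (w : ℂ) = ((1 - w : ℝ) : ℂ) by push_cast; ring]
        exact (Complex.ofReal_log h1w.le).symm
      rw [hlw, hl1w, hucoe]
      ring
    -- assemble
    simp only [smul_eq_mul, Complex.real_smul]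
    have hfv : ((Real.exp (-(φ w) * α) * sech (m + (φ w) * α) ^ 2 : ℝ) : ℂ) =
        ((Real.exp (-(φ w) * α) : ℝ) : ℂ) * ((4 * (w * (1 - w)) : ℝ) : ℂ) := by
      rw [hsech, Complex.ofReal_mul]
    have hexpm : Complex.exp (s * ((m : ℝ) : ℂ)) =
        ((Real.exp m : ℝ) : ℂ) * Complex.exp (((2 * π * ξ * m / α : ℝ) : ℂ) * Complex.I) := by
      rw [Complex.ofReal_exp, ← Complex.exp_add]
      congr 1
      rw [hs]
      push_cast
      ring
    rw [hfv, hphi', hcpow, hC]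
    have key : Complex.exp (((-2*π*(φ w)*ξ : ℝ):ℂ) * Complex.I) * ((Real.exp (-(φ w)*α) : ℝ):ℂ)
        = ((Real.exp m : ℝ):ℂ) * Complex.exp (((2*π*ξ*m/α : ℝ):ℂ) * Complex.I) *
          Complex.exp (-s * ((u:ℝ):ℂ)) := by
      rw [hexp1, hexpm]; ring
    have hscal : ((1 / (2*α*w*(1-w)) : ℝ) : ℂ) * ((4*(w*(1-w)) : ℝ) : ℂ) = ((2:ℝ):ℂ) / ((α:ℝ):ℂ) := by
      rw [← Complex.ofReal_mul,
        show (1 / (2*α*w*(1-w)) : ℝ) * (4*(w*(1-w))) = 2/α by field_simp; ring]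
      push_cast; ring
    calc ((1 / (2*α*w*(1-w)) : ℝ) : ℂ) * (Complex.exp (((-2*π*(φ w)*ξ : ℝ):ℂ) * Complex.I) *
          (((Real.exp (-(φ w)*α) : ℝ):ℂ) * ((4*(w*(1-w)) : ℝ):ℂ)))
        = (Complex.exp (((-2*π*(φ w)*ξ:ℝ):ℂ) * Complex.I) * ((Real.exp (-(φ w)*α):ℝ):ℂ)) *
            (((1 / (2*α*w*(1-w)) : ℝ) : ℂ) * ((4*(w*(1-w)) : ℝ) : ℂ)) := by ring
      _ = (((Real.exp m : ℝ):ℂ) * Complex.exp (((2*π*ξ*m/α : ℝ):ℂ) * Complex.I) *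
            Complex.exp (-s * ((u:ℝ):ℂ))) * (((2:ℝ):ℂ)/((α:ℝ):ℂ)) := by rw [key, hscal]
      _ = ((2 * Real.exp m / α : ℝ):ℂ) * Complex.exp (((2*π*ξ*m/α : ℝ):ℂ) * Complex.I) *
            Complex.exp (-s*((u:ℝ):ℂ)) := by push_cast; ring
  rw [MeasureTheory.setIntegral_congr_fun measurableSet_Ioo hpt]
  rw [MeasureTheory.integral_const_mul]
  have hIoo : (∫ w in Ioo (0:ℝ) 1,
      ((w:ℂ) ^ ((1 - s/2) - 1) * ((1:ℂ) - (w:ℂ)) ^ ((1 + s/2) - 1)))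
      = Complex.betaIntegral (1 - s/2) (1 + s/2) := by
    rw [Complex.betaIntegral,
      intervalIntegral.integral_of_le zero_le_one, MeasureTheory.integral_Ioc_eq_integral_Ioo]
  rw [hIoo]
  -- real parts of the Gamma arguments
  have hs2 : s/2 = ((1/2 : ℝ):ℂ) + ((π*ξ/α : ℝ):ℂ)*Complex.I := by
    rw [hs]; push_cast; ring
  have hre1 : (0:ℝ) < (1 - s/2).re := by
    rw [hs2]; simp; norm_num
  have hre2 : (0:ℝ) < (1 + s/2).re := by
    rw [hs2]; simp; norm_num
  have hG2 : Complex.Gamma 2 = 1 := by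
    rw [show (2:ℂ) = 1 + 1 by norm_num, Complex.Gamma_add_one _ one_ne_zero, Complex.Gamma_one,
      mul_one]
  have hsin : Complex.sin ((π:ℂ) * (s/2)) = ((Real.cosh (π^2*ξ/α) : ℝ):ℂ) := by
    rw [show (π:ℂ) * (s/2) = ((π^2*ξ/α : ℝ):ℂ)*Complex.I + (π:ℂ)/2 by rw [hs]; push_cast; ring]
    rw [Complex.sin_add_pi_div_two, Complex.cos_mul_I, Complex.ofReal_cosh]
  have hbeta' : Complex.betaIntegral (1 - s/2) (1 + s/2) =
      (s/2) * ((π:ℂ) / ((Real.cosh (π^2*ξ/α) : ℝ):ℂ)) := by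
    have h := Complex.Gamma_mul_Gamma_eq_betaIntegral hre1 hre2
    rw [show (1 - s/2) + (1 + s/2) = (2:ℂ) by ring, hG2, one_mul] at h
    rw [← h, show (1:ℂ) + s/2 = s/2 + 1 by ring, Complex.Gamma_add_one _ hs2_ne,
      show Complex.Gamma (1 - s/2) * (s/2 * Complex.Gamma (s/2)) =
        (s/2) * (Complex.Gamma (s/2) * Complex.Gamma (1 - s/2)) by ring,
      Complex.Gamma_mul_Gamma_one_sub, hsin]
  rw [hbeta', hC]
  have hch_ne : ((Real.cosh (π^2*ξ/α) : ℝ):ℂ) ≠ 0 :=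
    Complex.ofReal_ne_zero.mpr (Real.cosh_pos _).ne'
  have hαne : ((α : ℝ) : ℂ) ≠ 0 := Complex.ofReal_ne_zero.mpr hα.ne'
  rw [hs]
  push_cast
  field_simp

theorem stmt_13 (α m : ℝ) (hα : 0 < α) :
    Summable (fun n : ℤ => Real.exp (-(n : ℝ) * α) * sech (m + (n : ℝ) * α) ^ 2) ∧
    Summable (fun n : ℤ => sech (π ^ 2 * (n : ℝ) / α) *
      (α * Real.cos (2 * π * m * (n : ℝ) / α) - 2 * π * (n : ℝ) * Real.sin (2 * π * m * (n : ℝ) / α))) ∧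
    ∑' n : ℤ, Real.exp (-(n : ℝ) * α) * sech (m + (n : ℝ) * α) ^ 2 =
      (π * Real.exp m / α ^ 2) *
        ∑' n : ℤ, sech (π ^ 2 * (n : ℝ) / α) *
          (α * Real.cos (2 * π * m * (n : ℝ) / α) -
           2 * π * (n : ℝ) * Real.sin (2 * π * m * (n : ℝ) / α)) := by
  have hsumL := summable_lhs α m hα
  have hsumR : Summable (fun n : ℤ => sech (π ^ 2 * (n : ℝ) / α) *
      (α * Real.cos (2 * π * m * (n : ℝ) / α) -
        2 * π * (n : ℝ) * Real.sin (2 * π * m * (n : ℝ) / α))) := by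
    apply summable_sech_trig α hα
    intro n
    calc |α * Real.cos (2 * π * m * (n : ℝ) / α) -
          2 * π * (n : ℝ) * Real.sin (2 * π * m * (n : ℝ) / α)|
        ≤ |α * Real.cos (2 * π * m * (n : ℝ) / α)| +
          |2 * π * (n : ℝ) * Real.sin (2 * π * m * (n : ℝ) / α)| := abs_sub _ _
      _ ≤ α + 2 * π * |(n:ℝ)| := by
          gcongr
          · rw [abs_mul, abs_of_pos hα]
            calc α * |Real.cos _| ≤ α * 1 := by gcongr; exact Real.abs_cos_le_one _
              _ = α := mul_one α
          · rw [abs_mul, abs_mul, abs_mul, abs_of_pos Real.pi_pos, abs_two]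
            calc 2 * π * |(n:ℝ)| * |Real.sin _| ≤ 2 * π * |(n:ℝ)| * 1 := by
                  gcongr; exact Real.abs_sin_le_one _
              _ = 2 * π * |(n:ℝ)| := mul_one _
  refine ⟨hsumL, hsumR, ?_⟩
  -- the function for Poisson summation
  set f : ℝ → ℂ := fun x => ((Real.exp (-x * α) * sech (m + x * α) ^ 2 : ℝ) : ℂ) with hf
  have hcont : Continuous f := by
    rw [hf]
    apply Complex.continuous_ofReal.comp
    apply Continuous.mul
    · exact Real.continuous_exp.comp (continuous_id.neg.mul continuous_const)
    · apply Continuous.pow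
      unfold sech
      exact continuous_const.div (Real.continuous_cosh.comp
        (continuous_const.add (continuous_id.mul continuous_const)))
        (fun x => (Real.cosh_pos _).ne')
  have hfO : f =O[Filter.cocompact ℝ] (fun x : ℝ => |x| ^ (-2 : ℝ)) := by
    apply IsBigO.trans _ (decay_isBigO hα (4 * Real.exp (2 * |m|)) 0)
    apply isBigO_of_le
    intro x
    rw [hf]
    have h1 := lhs_bound α m hα x
    have h2 : (0:ℝ) ≤ (4 * Real.exp (2 * |m|) + 0 * |x|) * Real.exp (-α * |x|) := by positivity
    simp only [Complex.norm_real, Real.norm_eq_abs]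
    rw [abs_of_nonneg h2]
    exact h1
  have hFfO : (𝓕 f) =O[Filter.cocompact ℝ] (fun x : ℝ => |x| ^ (-2 : ℝ)) := by
    apply IsBigO.trans _ (decay_isBigO (c := π^2/α) (by positivity)
      (2 * π * Real.exp m / α) (4 * π^2 * Real.exp m / α^2))
    apply isBigO_of_le
    intro ξ
    rw [hf, fourier_sech α m ξ hα]
    have hch : (0:ℝ) < Real.cosh (π ^ 2 * ξ / α) := Real.cosh_pos _
    have h2 : (0:ℝ) ≤ (2 * π * Real.exp m / α + 4 * π^2 * Real.exp m / α^2 * |ξ|) *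
        Real.exp (-(π^2/α) * |ξ|) := by positivity
    rw [Real.norm_eq_abs, abs_of_nonneg h2]
    rw [norm_div, norm_mul, norm_mul]
    have e1 : ‖((π * Real.exp m / α ^ 2 : ℝ) : ℂ)‖ = π * Real.exp m / α ^ 2 := by
      rw [Complex.norm_real, Real.norm_eq_abs, abs_of_pos (by positivity)]
    have e2 : ‖Complex.exp (((2 * π * ξ * m / α : ℝ) : ℂ) * Complex.I)‖ = 1 := by
      rw [Complex.norm_exp_ofReal_mul_I]
    have e3 : ‖((Real.cosh (π ^ 2 * ξ / α) : ℝ) : ℂ)‖ = Real.cosh (π ^ 2 * ξ / α) := by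
      rw [Complex.norm_real, Real.norm_eq_abs, abs_of_pos hch]
    have e4 : ‖(α : ℂ) + ((2 * π * ξ : ℝ) : ℂ) * Complex.I‖ ≤ α + 2 * π * |ξ| := by
      calc ‖(α : ℂ) + ((2 * π * ξ : ℝ) : ℂ) * Complex.I‖
          ≤ ‖((α:ℝ) : ℂ)‖ + ‖((2 * π * ξ : ℝ) : ℂ) * Complex.I‖ := norm_add_le _ _
        _ = α + 2 * π * |ξ| := by
            rw [norm_mul, Complex.norm_I, mul_one, Complex.norm_real, Complex.norm_real,
              Real.norm_eq_abs, Real.norm_eq_abs, abs_of_pos hα]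
            congr 1
            rw [abs_mul, abs_mul, abs_two, abs_of_pos Real.pi_pos]
    have hsech2 : (Real.cosh (π ^ 2 * ξ / α))⁻¹ ≤ 2 * Real.exp (-(π^2/α) * |ξ|) := by
      have h := sech_le (π ^ 2 * ξ / α)
      unfold sech at h
      rw [one_div] at h
      have habs : |π ^ 2 * ξ / α| = (π^2/α) * |ξ| := by
        rw [abs_div, abs_mul, abs_of_pos hα, abs_of_pos (by positivity : (0:ℝ) < π^2)]
        ring
      rw [habs] at h
      rw [neg_mul] at *
      exact h
    rw [e1, e2, e3, mul_one, div_eq_mul_inv]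
    calc π * Real.exp m / α ^ 2 * ‖(α : ℂ) + ((2 * π * ξ : ℝ) : ℂ) * Complex.I‖ *
          (Real.cosh (π ^ 2 * ξ / α))⁻¹
        ≤ π * Real.exp m / α ^ 2 * (α + 2 * π * |ξ|) * (2 * Real.exp (-(π^2/α) * |ξ|)) := by
          apply mul_le_mul _ hsech2 (by positivity) (by positivity)
          apply mul_le_mul_of_nonneg_left e4 (by positivity)
      _ = (2 * π * Real.exp m / α + 4 * π^2 * Real.exp m / α^2 * |ξ|) *
            Real.exp (-(π^2/α) * |ξ|) := by
          field_simp
          ring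
  -- Poisson summation
  have hP := Real.tsum_eq_tsum_fourier_of_rpow_decay hcont one_lt_two
    (by simpa using hfO) (by simpa using hFfO) 0
  simp only [zero_add] at hP
  have hfour : ∀ n : ℤ, fourier n ((0:ℝ) : UnitAddCircle) = 1 := by
    intro n
    norm_num
  simp only [hfour, mul_one] at hP
  -- real and imaginary parts of the Fourier coefficients
  set a : ℤ → ℝ := fun k => π * Real.exp m / α ^ 2 * (sech (π ^ 2 * (k : ℝ) / α) *
    (α * Real.cos (2 * π * m * (k : ℝ) / α) -
      2 * π * (k : ℝ) * Real.sin (2 * π * m * (k : ℝ) / α))) with ha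
  set b : ℤ → ℝ := fun k => π * Real.exp m / α ^ 2 * (sech (π ^ 2 * (k : ℝ) / α) *
    (α * Real.sin (2 * π * m * (k : ℝ) / α) +
      2 * π * (k : ℝ) * Real.cos (2 * π * m * (k : ℝ) / α))) with hb
  have hck : ∀ k : ℤ, 𝓕 f ((k : ℤ) : ℝ) = ((a k : ℝ) : ℂ) + ((b k : ℝ) : ℂ) * Complex.I := by
    intro k
    rw [hf, fourier_sech α m k hα]
    have hch : (0:ℝ) < Real.cosh (π ^ 2 * (k:ℝ) / α) := Real.cosh_pos _
    have hch_ne : ((Real.cosh (π ^ 2 * (k:ℝ) / α) : ℝ) : ℂ) ≠ 0 :=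
      Complex.ofReal_ne_zero.mpr hch.ne'
    rw [div_eq_iff hch_ne]
    rw [show ((2 * π * (k:ℝ) * m / α : ℝ) : ℂ) = ((2 * π * m * (k:ℝ) / α : ℝ) : ℂ) by
      congr 1; ring]
    rw [Complex.exp_mul_I, ← Complex.ofReal_cos, ← Complex.ofReal_sin]
    rw [ha, hb]
    simp only [Complex.ext_iff, Complex.add_re, Complex.add_im, Complex.mul_re, Complex.mul_im,
      Complex.ofReal_re, Complex.ofReal_im, Complex.I_re, Complex.I_im]
    constructor <;> (unfold sech; field_simp; ring)
  have hsa : Summable a := hsumR.mul_left _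
  have hsb : Summable b := by
    apply Summable.mul_left
    apply summable_sech_trig α hα
    intro n
    calc |α * Real.sin (2 * π * m * (n : ℝ) / α) +
          2 * π * (n : ℝ) * Real.cos (2 * π * m * (n : ℝ) / α)|
        ≤ |α * Real.sin (2 * π * m * (n : ℝ) / α)| +
          |2 * π * (n : ℝ) * Real.cos (2 * π * m * (n : ℝ) / α)| := abs_add_le _ _
      _ ≤ α + 2 * π * |(n:ℝ)| := by
          gcongr
          · rw [abs_mul, abs_of_pos hα]
            calc α * |Real.sin _| ≤ α * 1 := by gcongr; exact Real.abs_sin_le_one _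
              _ = α := mul_one α
          · rw [abs_mul, abs_mul, abs_mul, abs_of_pos Real.pi_pos, abs_two]
            calc 2 * π * |(n:ℝ)| * |Real.cos _| ≤ 2 * π * |(n:ℝ)| * 1 := by
                  gcongr; exact Real.abs_cos_le_one _
              _ = 2 * π * |(n:ℝ)| := mul_one _
  have sech_neg : ∀ x : ℝ, sech (-x) = sech x := by
    intro x; unfold sech; rw [Real.cosh_neg]
  have hb_odd : ∀ k : ℤ, b (-k) = -(b k) := by
    intro k
    rw [hb]
    simp only [Int.cast_neg]
    rw [show π ^ 2 * (-(k:ℝ)) / α = -(π ^ 2 * (k:ℝ) / α) by ring,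
      show 2 * π * m * (-(k:ℝ)) / α = -(2 * π * m * (k:ℝ) / α) by ring,
      sech_neg, Real.sin_neg, Real.cos_neg]
    ring
  have htb0 : ∑' k : ℤ, b k = 0 := by
    have h1 := (Equiv.neg ℤ).tsum_eq b
    simp only [Equiv.neg_apply] at h1
    have h2 : ∑' k : ℤ, b (-k) = -∑' k : ℤ, b k := by
      rw [tsum_congr hb_odd, tsum_neg]
    rw [h2] at h1
    linarith
  have hSa : HasSum (fun k : ℤ => ((a k : ℝ) : ℂ)) ((∑' k : ℤ, a k : ℝ) : ℂ) := by
    have := hsa.hasSum.mapL Complex.ofRealCLM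
    simpa using this
  have hSb : HasSum (fun k : ℤ => ((b k : ℝ) : ℂ) * Complex.I) ((0:ℂ) * Complex.I) := by
    have h1 : HasSum (fun k : ℤ => ((b k : ℝ) : ℂ)) ((∑' k : ℤ, b k : ℝ) : ℂ) := by
      have := hsb.hasSum.mapL Complex.ofRealCLM
      simpa using this
    rw [htb0] at h1
    exact (by simpa using h1.mul_right Complex.I)
  have hS : HasSum (fun k : ℤ => ((a k : ℝ) : ℂ) + ((b k : ℝ) : ℂ) * Complex.I)
      ((∑' k : ℤ, a k : ℝ) : ℂ) := by
    have := hSa.add hSb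
    simpa using this
  have hQ : ∑' n : ℤ, 𝓕 f ((n : ℤ) : ℝ) = ((∑' k : ℤ, a k : ℝ) : ℂ) := by
    rw [tsum_congr hck]
    exact hS.tsum_eq
  have hL : ∑' n : ℤ, f ((n : ℤ) : ℝ) =
      ((∑' n : ℤ, Real.exp (-(n : ℝ) * α) * sech (m + (n : ℝ) * α) ^ 2 : ℝ) : ℂ) := by
    rw [hf, Complex.ofReal_tsum]
  have hfinal : (∑' n : ℤ, Real.exp (-(n : ℝ) * α) * sech (m + (n : ℝ) * α) ^ 2 : ℝ) =
      ∑' k : ℤ, a k := by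
    have := hP
    rw [hL, hQ] at this
    exact_mod_cast this
  rw [hfinal, ha]
  exact tsum_mul_left
end

section
/- Let z be a complex number that is not an integer, and suppose ζ(z) ≠ 0 and ζ(1−z) ≠ 0, where ζ is the Riemann zeta function. Then the digamma function satisfies ψ(z+1) = −ζ′(1−z)/ζ(1−z) − ζ′(z)/ζ(z) + 1/z + (π/2)·tan(π·z/2) + log(2π), where ψ(w) = Γ′(w)/Γ(w) is the logarithmic derivative of the complex Gamma function and ζ′ denotes the complex derivative of ζ. -/
open Complex Real

theorem stmt_14 (z : ℂ) (hz : ∀ n : ℤ, z ≠ (n : ℂ))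
    (h1 : riemannZeta z ≠ 0) (h2 : riemannZeta (1 - z) ≠ 0) :
    deriv Complex.Gamma (z + 1) / Complex.Gamma (z + 1) =
      -(deriv riemannZeta (1 - z) / riemannZeta (1 - z)) -
        deriv riemannZeta z / riemannZeta z + 1 / z +
        (π / 2) * Complex.tan (π * z / 2) + Real.log (2 * π) := by
  have hpi : (π : ℂ) ≠ 0 := Complex.ofReal_ne_zero.2 Real.pi_ne_zero
  have hz0 : z ≠ 0 := by simpa using hz 0
  have hz1 : z ≠ 1 := by simpa using hz 1
  have hne : ∀ n : ℕ, z ≠ -n := fun n => by simpa using hz (-n)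
  have h1z : (1 : ℂ) - z ≠ 1 := fun h => hz0 (by linear_combination -h)
  have hΓ : Complex.Gamma z ≠ 0 := Complex.Gamma_ne_zero hne
  have hcos : Complex.cos (π * z / 2) ≠ 0 := by
    rw [Ne, Complex.cos_eq_zero_iff]
    rintro ⟨k, hk⟩
    refine hz (2 * k + 1) ?_
    have h2 : (π : ℂ) * z = (π : ℂ) * ((2 * k + 1)) := by
      push_cast at hk; field_simp at hk; linear_combination (π : ℂ) * hk
    have := mul_left_cancel₀ hpi h2
    push_cast
    linear_combination this
  have hA : (2 * (π : ℂ)) ^ (-z) ≠ 0 := by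
    rw [Ne, cpow_eq_zero_iff]
    rintro ⟨h, -⟩
    exact hpi (by linear_combination h / 2)
  -- derivative facts
  have hΓ' : HasDerivAt Complex.Gamma (deriv Complex.Gamma z) z :=
    (Complex.differentiableAt_Gamma z hne).hasDerivAt
  have hζ' : HasDerivAt riemannZeta (deriv riemannZeta z) z :=
    (differentiableAt_riemannZeta hz1).hasDerivAt
  have hζ1' : HasDerivAt riemannZeta (deriv riemannZeta (1 - z)) (1 - z) :=
    (differentiableAt_riemannZeta h1z).hasDerivAt
  have hAd : HasDerivAt (fun s : ℂ => (2 * (π : ℂ)) ^ (-s))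
      ((2 * (π : ℂ)) ^ (-z) * Complex.log (2 * π) * (-1)) z :=
    HasDerivAt.const_cpow (hasDerivAt_id z).neg (Or.inl (by
      intro h; exact hpi (by linear_combination h / 2)))
  have hCd : HasDerivAt (fun s : ℂ => Complex.cos (π * s / 2))
      (-Complex.sin (π * z / 2) * (π / 2)) z := by
    have hin : HasDerivAt (fun s : ℂ => π * s / 2) ((π : ℂ) * 1 / 2) z :=
      ((hasDerivAt_id z).const_mul (π : ℂ)).div_const 2
    have := (Complex.hasDerivAt_cos (π * z / 2)).comp z hin
    exact this.congr_deriv (by ring)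
  -- functional equation eventually
  have hev : (fun s : ℂ => riemannZeta (1 - s)) =ᶠ[nhds z]
      (fun s : ℂ => 2 * (2 * (π : ℂ)) ^ (-s) * Complex.Gamma s * Complex.cos (π * s / 2) *
        riemannZeta s) := by
    have hzU : z ∈ (Set.range ((↑) : ℤ → ℂ))ᶜ := by
      intro ⟨n, hn⟩; exact hz n hn.symm
    filter_upwards [Complex.isOpen_compl_range_intCast.mem_nhds hzU] with s hs
    have hs' : ∀ n : ℤ, s ≠ (n : ℂ) := fun n h => hs ⟨n, h.symm⟩
    exact riemannZeta_one_sub (fun n => by simpa using hs' (-n)) (by simpa using hs' 1)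
  have hF : HasDerivAt (fun s : ℂ => 2 * (2 * (π : ℂ)) ^ (-s) * Complex.Gamma s *
      Complex.cos (π * s / 2) * riemannZeta s) _ z :=
    (((hAd.const_mul 2).mul hΓ').mul hCd).mul hζ'
  have hG : HasDerivAt (fun s : ℂ => riemannZeta (1 - s)) (deriv riemannZeta (1 - z) * -1) z :=
    hζ1'.comp z ((hasDerivAt_id z).const_sub 1)
  have huniq := hG.unique (hF.congr_of_eventuallyEq hev)
  have hfe : riemannZeta (1 - z) =
      2 * (2 * (π : ℂ)) ^ (-z) * Complex.Gamma z * Complex.cos (π * z / 2) * riemannZeta z :=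
    riemannZeta_one_sub hne hz1
  have hlog : Complex.log (2 * (π : ℂ)) = (Real.log (2 * π) : ℂ) := by
    rw [show (2 * (π : ℂ)) = ((2 * π : ℝ) : ℂ) by push_cast; ring,
      Complex.ofReal_log (by positivity)]
  -- digamma recurrence
  have hne1 : ∀ m : ℕ, z + 1 ≠ -m := fun m h => hz (-(m + 1)) (by push_cast; linear_combination h)
  have hΓ1' : HasDerivAt (fun s : ℂ => Complex.Gamma (s + 1)) (deriv Complex.Gamma (z + 1) * 1)
      z := (Complex.differentiableAt_Gamma _ hne1).hasDerivAt.comp z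
        ((hasDerivAt_id z).add_const 1)
  have hΓ2' : HasDerivAt (fun s : ℂ => s * Complex.Gamma s)
      (1 * Complex.Gamma z + z * deriv Complex.Gamma z) z := (hasDerivAt_id z).mul hΓ'
  have hevΓ : (fun s : ℂ => Complex.Gamma (s + 1)) =ᶠ[nhds z] fun s => s * Complex.Gamma s := by
    filter_upwards [eventually_ne_nhds hz0] with s hs
    exact Complex.Gamma_add_one s hs
  have hkey := hΓ1'.unique (hΓ2'.congr_of_eventuallyEq hevΓ)
  have hΓadd : Complex.Gamma (z + 1) = z * Complex.Gamma z := Complex.Gamma_add_one z hz0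
  -- put it together
  have hpsi : deriv Complex.Gamma (z + 1) / Complex.Gamma (z + 1) =
      1 / z + deriv Complex.Gamma z / Complex.Gamma z := by
    rw [hΓadd, show deriv Complex.Gamma (z + 1) = Complex.Gamma z + z * deriv Complex.Gamma z by
      linear_combination hkey]
    field_simp
  have hzeta : -(deriv riemannZeta (1 - z) / riemannZeta (1 - z)) =
      -(Real.log (2 * π) : ℂ) + deriv Complex.Gamma z / Complex.Gamma z -
        (π / 2) * (Complex.sin (π * z / 2) / Complex.cos (π * z / 2)) +
        deriv riemannZeta z / riemannZeta z := by
    have hD : deriv riemannZeta (1 - z) =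
        -(((2 * ((2 * (π : ℂ)) ^ (-z) * Complex.log (2 * π) * (-1)) * Complex.Gamma z +
            2 * (2 * (π : ℂ)) ^ (-z) * deriv Complex.Gamma z) *
            Complex.cos (π * z / 2) + 2 * (2 * (π : ℂ)) ^ (-z) * Complex.Gamma z *
            (-Complex.sin (π * z / 2) * (π / 2))) * riemannZeta z +
            2 * (2 * (π : ℂ)) ^ (-z) * Complex.Gamma z * Complex.cos (π * z / 2) *
            deriv riemannZeta z) := by simp only [Pi.mul_apply] at huniq; linear_combination -huniq
    rw [hD, hfe, hlog]
    set A := (2 * (π : ℂ)) ^ (-z) with hAdef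
    set G := Complex.Gamma z
    set C := Complex.cos (π * z / 2)
    set Z := riemannZeta z
    have hprod : 2 * A * G * C * Z ≠ 0 :=
      mul_ne_zero (mul_ne_zero (mul_ne_zero (mul_ne_zero two_ne_zero hA) hΓ) hcos) h1
    rw [neg_div, neg_neg, div_eq_iff hprod]
    field_simp [hΓ, hcos, h1]
    ring
  rw [hpsi, Complex.tan_eq_sin_div_cos, hzeta]
  ring
end
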